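/- The zero function is the only solution of u'' = W'(u) defined on all of ℝ. -/

import Mathlib

open MeasureTheory Set

lemma aux_tangent (W : ℝ → ℝ) (hWd : Differentiable ℝ W)
    (hWconv : ConvexOn ℝ Set.univ W) (hW0 : W 0 = 0) (t : ℝ) :
    W t ≤ t * deriv W t := by
  rcases lt_trichotomy t 0 with h | h | h
  · have h1 := hWconv.deriv_le_slope (mem_univ t) (mem_univ 0) h (hWd t)
    rw [slope_def_field, hW0] at h1
    rw [le_div_iff₀ (by linarith : (0:ℝ) < 0 - t)] at h1
    nlinarith [h1]
  · simp [h, hW0]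
  · have h1 := hWconv.slope_le_deriv (mem_univ 0) (mem_univ t) h (hWd t)
    rw [slope_def_field, hW0, sub_zero, sub_zero, div_le_iff₀ h] at h1
    linarith [h1]

lemma aux_growth (W : ℝ → ℝ) (hWd : Differentiable ℝ W)
    (hWconv : ConvexOn ℝ Set.univ W) (hW0 : W 0 = 0) {t : ℝ} (ht : 2 ≤ t) :
    W 2 / 2 * t ≤ W t := by
  rcases eq_or_lt_of_le ht with h | h
  · rw [← h]; ring_nf; exact le_refl _
  · have h1 := hWconv.slope_le_deriv (mem_univ (0:ℝ)) (mem_univ 2) (by norm_num) (hWd 2)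
    have h2 := hWconv.deriv_le_slope (mem_univ (2:ℝ)) (mem_univ t) h (hWd 2)
    rw [slope_def_field, hW0, sub_zero, sub_zero] at h1
    rw [slope_def_field] at h2
    have h3 : W 2 / 2 ≤ (W t - W 2) / (t - 2) := h1.trans h2
    rw [le_div_iff₀ (by linarith : (0:ℝ) < t - 2)] at h3
    nlinarith

lemma aux_energy (W : ℝ → ℝ) (hWd : Differentiable ℝ W)
    (u u' : ℝ → ℝ) (hu : ∀ x, HasDerivAt u (u' x) x)
    (hu' : ∀ x, HasDerivAt u' (deriv W (u x)) x) (x y : ℝ) :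
    u' x ^ 2 - 2 * W (u x) = u' y ^ 2 - 2 * W (u y) := by
  have hE : ∀ x, HasDerivAt (fun x => u' x ^ 2 - 2 * W (u x)) 0 x := by
    intro x
    have h1 : HasDerivAt (fun x => u' x ^ 2) (2 * u' x * deriv W (u x)) x := by
      have := (hu' x).pow 2
      exact this.congr_deriv (by push_cast; ring)
    have h2 : HasDerivAt (fun x => W (u x)) (deriv W (u x) * u' x) x :=
      (hWd (u x)).hasDerivAt.comp x (hu x)
    have h3 := h1.sub (h2.const_mul 2)
    exact h3.congr_deriv (by ring)
  exact is_const_of_deriv_eq_zero (fun x => (hE x).differentiableAt)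
    (fun x => (hE x).deriv) x y

lemma aux_core (W : ℝ → ℝ) (hW : ContDiff ℝ 2 W) (hWnn : ∀ t, 0 ≤ W t)
    (hWconv : ConvexOn ℝ Set.univ W) (hWvan : ∀ t, W t = 0 ↔ t = 0)
    (hWint : IntegrableOn (fun u => 1 / Real.sqrt (W u)) {u : ℝ | 1 < |u|})
    (u u' : ℝ → ℝ)
    (hu : ∀ x : ℝ, HasDerivAt u (u' x) x)
    (hu' : ∀ x : ℝ, HasDerivAt u' (deriv W (u x)) x)
    (x₂ m : ℝ) (hm : 0 < m) (hpos : 0 < u x₂)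
    (hlb : ∀ x, x₂ ≤ x → m ≤ u x * u' x) : False := by
  have hWd : Differentiable ℝ W := hW.differentiable two_ne_zero
  have hW0 : W 0 = 0 := (hWvan 0).mpr rfl
  have hucont : Continuous u := by
    rw [continuous_iff_continuousAt]; exact fun x => (hu x).continuousAt
  have hne : ∀ x, x₂ ≤ x → u x ≠ 0 := by
    intro x hx h0
    have h := hlb x hx; rw [h0, zero_mul] at h; linarith
  have hupos : ∀ x, x₂ ≤ x → 0 < u x := by
    intro x hx
    by_contra hle
    push_neg at hle
    have h0 : (0:ℝ) ∈ Icc (u x) (u x₂) := ⟨hle, hpos.le⟩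
    obtain ⟨z, hz, hz0⟩ := intermediate_value_Icc' hx hucont.continuousOn h0
    exact hne z hz.1 hz0
  have hu'pos : ∀ x, x₂ ≤ x → 0 < u' x := by
    intro x hx
    by_contra hle; push_neg at hle
    have h := hlb x hx
    nlinarith [hupos x hx]
  have humono : MonotoneOn u (Ici x₂) := by
    apply monotoneOn_of_deriv_nonneg (convex_Ici x₂) hucont.continuousOn
    · exact fun x _ => (hu x).differentiableAt.differentiableWithinAt
    · intro x hx
      rw [(hu x).deriv]
      exact (hu'pos x (le_of_lt (by simpa using hx))).le
  -- quadratic growth of u²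
  have hsq : ∀ x, x₂ ≤ x → u x₂ ^ 2 + 2*m*(x - x₂) ≤ u x ^ 2 := by
    intro x hx
    have hφ : ∀ y, HasDerivAt (fun y => u y ^ 2 - 2*m*y) (2 * u y * u' y - 2*m) y := by
      intro y
      have h1 := (hu y).pow 2
      have h2 := h1.sub ((hasDerivAt_id y).const_mul (2*m))
      exact h2.congr_deriv (by push_cast; ring)
    have hmn : MonotoneOn (fun y => u y ^ 2 - 2*m*y) (Ici x₂) := by
      apply monotoneOn_of_deriv_nonneg (convex_Ici x₂)
      · exact fun y _ => ((hφ y).continuousAt).continuousWithinAt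
      · exact fun y _ => (hφ y).differentiableAt.differentiableWithinAt
      · intro y hy
        rw [(hφ y).deriv]
        have := hlb y (le_of_lt (by simpa using hy))
        linarith
    have h := hmn self_mem_Ici (mem_Ici.mpr hx) hx
    simp only at h
    linarith
  -- energy constant
  set c := u' x₂ ^ 2 - 2 * W (u x₂) with hc
  have henergy : ∀ x, u' x ^ 2 = 2 * W (u x) + c := by
    intro x
    have h := aux_energy W hWd u u' hu hu' x x₂
    rw [hc]; linarith
  have hW2 : 0 < W 2 := by
    rcases (hWnn 2).lt_or_eq with h | h
    · exact h
    · exact absurd ((hWvan 2).mp h.symm) (by norm_num)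
  set C := max (-c) 0 with hCdef
  have hC0 : 0 ≤ C := le_max_right _ _
  set B := max 2 (2*C/(W 2) + 2) with hBdef
  have hB2 : 2 ≤ B := le_max_left _ _
  set x₃ := x₂ + B^2/(2*m) with hx₃def
  have hx₂₃ : x₂ ≤ x₃ := by
    rw [hx₃def]; have : 0 ≤ B^2/(2*m) := by positivity
    linarith
  have huB : B ≤ u x₃ := by
    have h1 := hsq x₃ hx₂₃
    have h2 : B^2 ≤ u x₃ ^ 2 := by
      rw [hx₃def] at h1 ⊢
      have : 2*m*(x₂ + B^2/(2*m) - x₂) = B^2 := by field_simp; ring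
      nlinarith [sq_nonneg (u x₂)]
    by_contra hlt
    push_neg at hlt
    have := pow_lt_pow_left₀ hlt (hupos x₃ hx₂₃).le two_ne_zero
    linarith
  set a := u x₃ with hadef
  have ha2 : 2 ≤ a := hB2.trans huB
  have hux2 : ∀ x, x₃ ≤ x → 2 ≤ u x := fun x hx =>
    ha2.trans (humono (mem_Ici.mpr hx₂₃) (mem_Ici.mpr (hx₂₃.trans hx)) hx)
  have huxa : ∀ x, x₃ ≤ x → a ≤ u x := fun x hx =>
    humono (mem_Ici.mpr hx₂₃) (mem_Ici.mpr (hx₂₃.trans hx)) hx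
  -- W (u x) ≥ -c for x ≥ x₃
  have hWc : ∀ x, x₃ ≤ x → -c ≤ W (u x) := by
    intro x hx
    have h1 : W 2 / 2 * u x ≤ W (u x) := aux_growth W hWd hWconv hW0 (hux2 x hx)
    have h2 : B ≤ u x := huB.trans (huxa x hx)
    have h3 : 2*C/(W 2) + 2 ≤ B := le_max_right _ _
    have h4 : -c ≤ C := le_max_left _ _
    have h5 : W 2 / 2 * B ≤ W 2 / 2 * u x :=
      mul_le_mul_of_nonneg_left h2 (by positivity)
    have h6 : C ≤ W 2 / 2 * B := by
      have : W 2 / 2 * (2*C/(W 2) + 2) = C + W 2 := by field_simp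
      nlinarith
    linarith
  -- u' x ≥ sqrt (W (u x)) for x ≥ x₃
  have hu'sqrt : ∀ x, x₃ ≤ x → Real.sqrt (W (u x)) ≤ u' x := by
    intro x hx
    have h1 : W (u x) ≤ u' x ^ 2 := by
      have := henergy x; have := hWc x hx; linarith
    calc Real.sqrt (W (u x)) ≤ Real.sqrt (u' x ^ 2) := Real.sqrt_le_sqrt h1
      _ = u' x := Real.sqrt_sq (hu'pos x (hx₂₃.trans hx)).le
  -- integral setup
  set g : ℝ → ℝ := fun t => 1 / Real.sqrt (W t) with hgdef
  have hsubset : ∀ b, Ioc a b ⊆ {t : ℝ | 1 < |t|} := by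
    intro b t ht
    simp only [mem_setOf_eq]
    rw [abs_of_pos (by linarith [ht.1] : (0:ℝ) < t)]
    linarith [ht.1]
  have hii : ∀ b, a ≤ b → IntervalIntegrable g volume a b := by
    intro b hb
    rw [intervalIntegrable_iff, uIoc_of_le hb]
    exact hWint.mono_set (hsubset b)
  have gmeas : Measurable g :=
    measurable_const.div (Real.continuous_sqrt.comp hW.continuous).measurable
  have hFderiv : ∀ x, x₃ ≤ x →
      HasDerivAt (fun y => ∫ t in a..(u y), g t) (g (u x) * u' x) x := by
    intro x hx
    have hWpos : 0 < W (u x) := by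
      rcases (hWnn (u x)).lt_or_eq with h | h
      · exact h
      · exact absurd ((hWvan (u x)).mp h.symm)
          (by have := hux2 x hx; intro h0; rw [h0] at this; norm_num at this)
    have hcont : ContinuousAt g (u x) := by
      apply ContinuousAt.div continuousAt_const
        (Real.continuous_sqrt.comp hW.continuous).continuousAt
      exact (Real.sqrt_pos.mpr hWpos).ne'
    have hFTC := intervalIntegral.integral_hasDerivAt_right (hii (u x) (huxa x hx))
      (gmeas.stronglyMeasurable.stronglyMeasurableAtFilter) hcont
    exact hFTC.comp x (hu x)
  set M := ∫ t in {t : ℝ | 1 < |t|}, g t with hMdef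
  have hsetmeas : MeasurableSet {t : ℝ | 1 < |t|} :=
    (isOpen_lt continuous_const continuous_abs).measurableSet
  have hgnn : ∀ t, 0 ≤ g t := fun t => by rw [hgdef]; positivity
  have hM0 : 0 ≤ M := setIntegral_nonneg hsetmeas (fun t _ => hgnn t)
  have hFub : ∀ x, x₃ ≤ x → (∫ t in a..(u x), g t) ≤ M := by
    intro x hx
    rw [intervalIntegral.integral_of_le (huxa x hx)]
    exact setIntegral_mono_set hWint (Filter.Eventually.of_forall hgnn)
      ((hsubset (u x)).eventuallyLE
      )
  have hFmono : MonotoneOn (fun x => (∫ t in a..(u x), g t) - x) (Ici x₃) := by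
    apply monotoneOn_of_deriv_nonneg (convex_Ici x₃)
    · intro x hx
      exact ((hFderiv x hx).sub (hasDerivAt_id x)).continuousAt.continuousWithinAt
    · intro x hx
      have hx' : x₃ ≤ x := le_of_lt (by simpa using hx)
      exact ((hFderiv x hx').sub (hasDerivAt_id x)).differentiableAt.differentiableWithinAt
    · intro x hx
      have hx' : x₃ ≤ x := le_of_lt (by simpa using hx)
      have hD : HasDerivAt (fun x => (∫ t in a..(u x), g t) - x) (g (u x) * u' x - 1) x :=
        (hFderiv x hx').sub (hasDerivAt_id x)
      rw [hD.deriv]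
      have hsp : 0 < Real.sqrt (W (u x)) := by
        apply Real.sqrt_pos.mpr
        rcases (hWnn (u x)).lt_or_eq with h | h
        · exact h
        · exact absurd ((hWvan (u x)).mp h.symm)
            (by have := hux2 x hx'; intro h0; rw [h0] at this; norm_num at this)
      have h1 : 1 ≤ u' x / Real.sqrt (W (u x)) :=
        (one_le_div hsp).mpr (hu'sqrt x hx')
      have h2 : g (u x) * u' x = u' x / Real.sqrt (W (u x)) := by
        rw [hgdef]; ring
      rw [h2]; linarith
  -- contradiction
  have hfinal := hFmono (self_mem_Ici) (mem_Ici.mpr (by linarith : x₃ ≤ x₃ + M + 1))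
    (by linarith : x₃ ≤ x₃ + M + 1)
  simp only [← hadef, intervalIntegral.integral_same] at hfinal
  have := hFub (x₃ + M + 1) (by linarith)
  linarith

lemma aux_core2 (W : ℝ → ℝ) (hW : ContDiff ℝ 2 W) (hWnn : ∀ t, 0 ≤ W t)
    (hWconv : ConvexOn ℝ Set.univ W) (hWvan : ∀ t, W t = 0 ↔ t = 0)
    (hWint : IntegrableOn (fun u => 1 / Real.sqrt (W u)) {u : ℝ | 1 < |u|})
    (u u' : ℝ → ℝ)
    (hu : ∀ x : ℝ, HasDerivAt u (u' x) x)
    (hu' : ∀ x : ℝ, HasDerivAt u' (deriv W (u x)) x)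
    (x₂ m : ℝ) (hm : 0 < m) (hne : u x₂ ≠ 0)
    (hlb : ∀ x, x₂ ≤ x → m ≤ u x * u' x) : False := by
  have hWd : Differentiable ℝ W := hW.differentiable two_ne_zero
  rcases hne.lt_or_gt with hneg | hpos
  · set V : ℝ → ℝ := fun t => W (-t) with hVdef
    have hVcd : ContDiff ℝ 2 V := hW.comp (contDiff_id.neg)
    have hVnn : ∀ t, 0 ≤ V t := fun t => hWnn (-t)
    have hVconv : ConvexOn ℝ Set.univ V := by
      refine ⟨convex_univ, fun x _ y _ a b ha hb hab => ?_⟩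
      have h := hWconv.2 (mem_univ (-x)) (mem_univ (-y)) ha hb hab
      have he : a • (-x) + b • (-y) = -(a • x + b • y) := by
        simp only [smul_eq_mul]; ring
      rw [he] at h
      exact h
    have hVvan : ∀ t, V t = 0 ↔ t = 0 := by
      intro t; rw [hVdef]; simp only [hWvan (-t), neg_eq_zero]
    have hVint : IntegrableOn (fun t => 1 / Real.sqrt (V t)) {t : ℝ | 1 < |t|} := by
      have h2 := ((Measure.measurePreserving_neg (volume : Measure ℝ)).integrableOn_comp_preimage
        (Homeomorph.neg ℝ).measurableEmbedding
        (f := fun t => 1 / Real.sqrt (W t)) (s := {t : ℝ | 1 < |t|})).2 hWint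
      have h1 : Neg.neg ⁻¹' {t : ℝ | 1 < |t|} = {t : ℝ | 1 < |t|} := by
        ext t; simp [abs_neg]
      rw [h1] at h2
      exact h2
    have hvd : ∀ x, HasDerivAt (fun x => -u x) (-u' x) x := fun x => (hu x).neg
    have hvd' : ∀ x, HasDerivAt (fun x => -u' x) (deriv V ((fun x => -u x) x)) x := by
      intro x
      have hd : HasDerivAt V (-(deriv W (u x))) (-(u x)) := by
        have h := ((hWd (-(-(u x)))).hasDerivAt.comp (-(u x)) (hasDerivAt_neg (-(u x))))
        simp only [neg_neg, mul_neg_one] at h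
        exact h
      have h2 : deriv V (-(u x)) = -(deriv W (u x)) := hd.deriv
      show HasDerivAt (fun x => -u' x) (deriv V (-(u x))) x
      rw [h2]
      exact (hu' x).neg
    have hvpos : 0 < (fun x => -u x) x₂ := by simpa using hneg
    have hvlb : ∀ x, x₂ ≤ x → m ≤ (fun x => -u x) x * (fun x => -u' x) x := by
      intro x hx
      have h := hlb x hx
      show m ≤ -u x * -u' x
      nlinarith
    exact aux_core V hVcd hVnn hVconv hVvan hVint (fun x => -u x) (fun x => -u' x)
      hvd hvd' x₂ m hm hvpos hvlb
  · exact aux_core W hW hWnn hWconv hWvan hWint u u' hu hu' x₂ m hm hpos hlb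

theorem zero_unique_entire_ode_solution
    (W : ℝ → ℝ) (hW : ContDiff ℝ 2 W) (hWnn : ∀ t, 0 ≤ W t)
    (hWconv : ConvexOn ℝ Set.univ W) (hWvan : ∀ t, W t = 0 ↔ t = 0)
    (hWint : IntegrableOn (fun u => 1 / Real.sqrt (W u)) {u : ℝ | 1 < |u|})
    (u u' : ℝ → ℝ)
    (hu : ∀ x : ℝ, HasDerivAt u (u' x) x)
    (hu' : ∀ x : ℝ, HasDerivAt u' (deriv W (u x)) x) :
    ∀ x : ℝ, u x = 0 := by
  have hWd : Differentiable ℝ W := hW.differentiable two_ne_zero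
  have hW0 : W 0 = 0 := (hWvan 0).mpr rfl
  intro x₀
  by_contra hne0
  have hh : ∀ x, HasDerivAt (fun x => u x * u' x) (u' x * u' x + u x * deriv W (u x)) x :=
    fun x => (hu x).mul (hu' x)
  have hmono : Monotone (fun x => u x * u' x) := by
    apply monotone_of_deriv_nonneg (fun x => (hh x).differentiableAt)
    intro x
    rw [(hh x).deriv]
    have := aux_tangent W hWd hWconv hW0 (u x)
    nlinarith [hWnn (u x), mul_self_nonneg (u' x)]
  have hWpos0 : 0 < W (u x₀) := (hWnn _).lt_of_ne (fun h => hne0 ((hWvan _).mp h.symm))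
  have hkey : u (x₀ - 1) * u' (x₀ - 1) < u (x₀ + 1) * u' (x₀ + 1) := by
    by_contra hle
    push_neg at hle
    have hEq : (fun x => u x * u' x) =ᶠ[nhds x₀] (fun _ => u (x₀-1) * u' (x₀-1)) := by
      filter_upwards [Ioo_mem_nhds (by linarith : x₀ - 1 < x₀) (by linarith : x₀ < x₀ + 1)]
        with y hy
      have h1 := hmono (le_of_lt hy.1)
      have h2 := hmono (le_of_lt hy.2)
      simp only at h1 h2 ⊢
      linarith
    have h0 : HasDerivAt (fun x => u x * u' x) 0 x₀ :=
      (hasDerivAt_const x₀ (u (x₀-1) * u' (x₀-1))).congr_of_eventuallyEq hEq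
    have huniq := (hh x₀).unique h0
    have htan := aux_tangent W hWd hWconv hW0 (u x₀)
    nlinarith [mul_self_nonneg (u' x₀)]
  rcases lt_or_ge 0 (u (x₀+1) * u' (x₀+1)) with hA | hA
  · have hneA : u (x₀+1) ≠ 0 := by
      intro h; rw [h, zero_mul] at hA; exact lt_irrefl 0 hA
    exact aux_core2 W hW hWnn hWconv hWvan hWint u u' hu hu' (x₀+1) _ hA hneA
      (fun x hx => hmono hx)
  · have hB : u (x₀-1) * u' (x₀-1) < 0 := lt_of_lt_of_le hkey hA
    have hv : ∀ x, HasDerivAt (fun x => u (-x)) (-u' (-x)) x := by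
      intro x
      have h := (hu (-x)).comp x (hasDerivAt_neg x)
      exact h.congr_deriv (by ring)
    have hv' : ∀ x, HasDerivAt (fun x => -u' (-x)) (deriv W (u (-x))) x := by
      intro x
      have h := ((hu' (-x)).comp x (hasDerivAt_neg x)).neg
      exact h.congr_deriv (by ring)
    apply aux_core2 W hW hWnn hWconv hWvan hWint (fun x => u (-x)) (fun x => -u' (-x))
      hv hv' (1 - x₀) (-(u (x₀-1) * u' (x₀-1))) (by linarith) ?_ ?_
    · show u (-(1 - x₀)) ≠ 0
      rw [show -(1 - x₀) = x₀ - 1 by ring]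
      intro h; rw [h, zero_mul] at hB; exact lt_irrefl 0 hB
    · intro x hx
      have h1 : -x ≤ x₀ - 1 := by linarith
      have h2 := hmono h1
      simp only at h2
      show -(u (x₀-1) * u' (x₀-1)) ≤ u (-x) * -u' (-x)
      nlinarith
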